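/- Let γ, α, β, δ, ξ > 0 with β − δα > 0, β > δ and ξ > δ/(β − δα). Let x, y : [0,∞) → ℝ be a differentiable solution of system (AF) with x(0) > 0 and y(0) > 0. Then the solution blows up in infinite time: x(t) → 0 and y(t) → ∞ as t → ∞. -/

import Mathlib

set_option maxHeartbeats 1000000

open Set Filter Real

private lemma no_zero_crossing (f g : ℝ → ℝ)
    (hf : ∀ t : ℝ, 0 ≤ t → HasDerivAt f (g t) t)
    (h0 : 0 < f 0)
    (hbound : ∀ T : ℝ, 0 < T → (∀ t ∈ Set.Icc (0:ℝ) T, 0 ≤ f t) →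
      ∃ K : ℝ, ∀ t ∈ Set.Icc (0:ℝ) T, |g t| ≤ K * |f t|) :
    ∀ t : ℝ, 0 ≤ t → 0 < f t := by
  by_contra hcon
  push_neg at hcon
  obtain ⟨t₁, ht₁0, ht₁⟩ := hcon
  have hfc : ∀ t : ℝ, 0 ≤ t → ContinuousAt f t := fun t ht => (hf t ht).continuousAt
  set S : Set ℝ := {t | 0 ≤ t ∧ f t ≤ 0} with hS
  have hne : S.Nonempty := ⟨t₁, ht₁0, ht₁⟩
  have hbdd : BddBelow S := ⟨0, fun t ht => ht.1⟩
  set T := sInf S with hT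
  have hT0 : 0 ≤ T := le_csInf hne fun t ht => ht.1
  have hTmem : T ∈ S := by
    obtain ⟨u, -, hu_tend, hu_mem⟩ := exists_seq_tendsto_sInf hne hbdd
    refine ⟨hT0, ?_⟩
    have : Tendsto (f ∘ u) atTop (nhds (f T)) := ((hfc T hT0).tendsto).comp hu_tend
    exact le_of_tendsto this (Eventually.of_forall fun n => (hu_mem n).2)
  have hTpos : 0 < T := by
    rcases lt_or_eq_of_le hT0 with h | h
    · exact h
    · exfalso; rw [← h] at hTmem; exact absurd hTmem.2 (not_le.2 h0)
  have hfpos : ∀ t, 0 ≤ t → t < T → 0 < f t := by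
    intro t ht htT
    by_contra hle
    push_neg at hle
    exact absurd (csInf_le hbdd ⟨ht, hle⟩) (not_le.2 htT)
  have hfT0 : f T = 0 := by
    refine le_antisymm hTmem.2 ?_
    have hne' : (nhdsWithin T (Ico 0 T)).NeBot := by
      apply mem_closure_iff_nhdsWithin_neBot.1
      rw [closure_Ico hTpos.ne]
      exact ⟨hT0, le_refl T⟩
    exact ge_of_tendsto ((hfc T hT0).continuousWithinAt.tendsto)
      (eventually_nhdsWithin_of_forall (fun t (ht : t ∈ Ico 0 T) => (hfpos t ht.1 ht.2).le))
  have hfnn : ∀ t ∈ Icc (0:ℝ) T, 0 ≤ f t := by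
    rintro t ⟨ht0, htT⟩
    rcases lt_or_eq_of_le htT with h | h
    · exact (hfpos t ht0 h).le
    · rw [h, hfT0]
  obtain ⟨K, hK⟩ := hbound T hTpos hfnn
  have hcontu : ContinuousOn (fun s => f (T - s)) (Icc 0 T) := by
    intro s hs
    have h1 : 0 ≤ T - s := by linarith [hs.2]
    exact ((hfc _ h1).comp (continuousAt_const.sub continuousAt_id)).continuousWithinAt
  have hderiv : ∀ s ∈ Ico (0:ℝ) T, HasDerivWithinAt (fun s => f (T - s)) (-g (T - s)) (Ici s) s := by
    intro s hs
    have h1 : 0 ≤ T - s := by linarith [hs.2.le]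
    have h2 := (hf (T - s) h1).comp s ((hasDerivAt_id s).const_sub T)
    have h3 : g (T - s) * (-1) = -g (T - s) := by ring
    rw [h3] at h2
    exact h2.hasDerivWithinAt
  have hg := norm_le_gronwallBound_of_norm_deriv_right_le (δ := 0) (K := K) (ε := 0)
    hcontu hderiv (by simp [hfT0]) (fun s hs => by
      have hmem : T - s ∈ Icc (0:ℝ) T := ⟨by linarith [hs.2.le], by linarith [hs.1]⟩
      simpa [Real.norm_eq_abs] using hK (T - s) hmem)
  have h5 := hg T ⟨hT0, le_refl T⟩
  simp [gronwallBound_ε0_δ0] at h5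
  rw [h5] at h0
  exact lt_irrefl 0 h0



/-- **Theorem thm:t1ug.**
For the additional-food predator-pest system (AF)
  dx/dt = x(1 − x/γ) − x y/(1 + αξ + x),
  dy/dt = β x y/(1 + αξ + x) + β ξ y/(1 + αξ + x) − δ y,
with γ, α, β, δ, ξ > 0, β − δα > 0, β > δ and ξ > δ/(β − δα), every solution
with positive initial data blows up in infinite time:
x(t) → 0 and y(t) → ∞ as t → ∞. -/
theorem stmt_0 (γ α β δ ξ : ℝ)
    (hγ : 0 < γ) (hα : 0 < α) (hβ : 0 < β) (hδ : 0 < δ) (hξ : 0 < ξ)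
    (hqual : 0 < β - δ * α) (hβδ : δ < β)
    (hcrit : δ / (β - δ * α) < ξ)
    (x y : ℝ → ℝ)
    (hx : ∀ t : ℝ, 0 ≤ t →
      HasDerivAt x (x t * (1 - x t / γ) - x t * y t / (1 + α * ξ + x t)) t)
    (hy : ∀ t : ℝ, 0 ≤ t →
      HasDerivAt y (β * x t * y t / (1 + α * ξ + x t)
        + β * ξ * y t / (1 + α * ξ + x t) - δ * y t) t)
    (hx0 : 0 < x 0) (hy0 : 0 < y 0) :
    Filter.Tendsto x Filter.atTop (nhds 0) ∧
      Filter.Tendsto y Filter.atTop Filter.atTop := by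
  have hc : (0:ℝ) < 1 + α * ξ := by positivity
  have hxc : ∀ t : ℝ, 0 ≤ t → ContinuousAt x t := fun t ht => (hx t ht).continuousAt
  have hyc : ∀ t : ℝ, 0 ≤ t → ContinuousAt y t := fun t ht => (hy t ht).continuousAt
  -- positivity of x
  have hxpos : ∀ t : ℝ, 0 ≤ t → 0 < x t := by
    apply no_zero_crossing x _ hx hx0
    intro T hT hnn
    have hcx : ContinuousOn x (Icc 0 T) := fun t ht => (hxc t ht.1).continuousWithinAt
    have hcy : ContinuousOn y (Icc 0 T) := fun t ht => (hyc t ht.1).continuousWithinAt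
    obtain ⟨X, hX⟩ := isCompact_Icc.exists_bound_of_continuousOn hcx
    obtain ⟨Y, hY⟩ := isCompact_Icc.exists_bound_of_continuousOn hcy
    refine ⟨1 + X / γ + Y / (1 + α * ξ), fun t ht => ?_⟩
    have h1 : 0 ≤ x t := hnn t ht
    have h2 : 0 < 1 + α * ξ + x t := by linarith
    have hXt : |x t| ≤ X := hX t ht
    have hYt : |y t| ≤ Y := hY t ht
    have hfac : x t * (1 - x t / γ) - x t * y t / (1 + α * ξ + x t)
        = x t * ((1 - x t / γ) - y t / (1 + α * ξ + x t)) := by ring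
    rw [hfac, abs_mul, mul_comm]
    refine mul_le_mul_of_nonneg_right ?_ (abs_nonneg _)
    calc |(1 - x t / γ) - y t / (1 + α * ξ + x t)|
        ≤ |1 - x t / γ| + |y t / (1 + α * ξ + x t)| := abs_sub _ _
      _ ≤ (1 + X / γ) + Y / (1 + α * ξ) := by
          gcongr
          · calc |1 - x t / γ| ≤ |1| + |x t / γ| := abs_sub _ _
              _ = 1 + |x t| / γ := by rw [abs_one, abs_div, abs_of_pos hγ]
              _ ≤ 1 + X / γ := by gcongr
          · rw [abs_div, abs_of_pos h2]
            exact div_le_div₀ ((abs_nonneg _).trans hYt) hYt hc (by linarith)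
      _ = 1 + X / γ + Y / (1 + α * ξ) := by ring
  -- positivity of y
  have hypos : ∀ t : ℝ, 0 ≤ t → 0 < y t := by
    apply no_zero_crossing y _ hy hy0
    intro T hT _
    refine ⟨β + β * ξ / (1 + α * ξ) + δ, fun t ht => ?_⟩
    have h1 : 0 < x t := hxpos t ht.1
    have h2 : 0 < 1 + α * ξ + x t := by linarith
    have hfac : β * x t * y t / (1 + α * ξ + x t) + β * ξ * y t / (1 + α * ξ + x t) - δ * y t
        = y t * (β * x t / (1 + α * ξ + x t) + β * ξ / (1 + α * ξ + x t) - δ) := by ring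
    rw [hfac, abs_mul, mul_comm]
    refine mul_le_mul_of_nonneg_right ?_ (abs_nonneg _)
    have e1 : β * x t / (1 + α * ξ + x t) ≤ β := by
      rw [div_le_iff₀ h2]; nlinarith
    have e2 : β * ξ / (1 + α * ξ + x t) ≤ β * ξ / (1 + α * ξ) :=
      div_le_div₀ (by positivity) le_rfl hc (by linarith)
    have e3 : (0:ℝ) ≤ β * x t / (1 + α * ξ + x t) := by positivity
    have e4 : (0:ℝ) ≤ β * ξ / (1 + α * ξ + x t) := by positivity
    rw [abs_le]
    constructor <;> [skip; skip] <;> nlinarith [e1, e2, e3, e4]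
  -- upper bound on x
  obtain ⟨B, hBdef⟩ : ∃ B : ℝ, B = max γ (x 0) := ⟨_, rfl⟩
  have hγB : γ ≤ B := hBdef ▸ le_max_left _ _
  have hBpos : 0 < B := lt_of_lt_of_le hγ hγB
  have hB : ∀ t : ℝ, 0 ≤ t → x t ≤ B := by
    by_contra hcon
    push_neg at hcon
    obtain ⟨t₁, ht₁0, ht₁⟩ := hcon
    have hx0B : x 0 ≤ B := hBdef ▸ le_max_right _ _
    have ht₁pos : 0 < t₁ := by
      rcases lt_or_eq_of_le ht₁0 with h | h
      · exact h
      · exfalso; rw [← h] at ht₁; exact absurd hx0B (not_le.2 ht₁)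
    set S : Set ℝ := {t | t ∈ Icc (0:ℝ) t₁ ∧ x t ≤ B} with hS
    have hne : S.Nonempty := ⟨0, ⟨le_refl 0, ht₁0⟩, hx0B⟩
    have hbdd : BddAbove S := ⟨t₁, fun t ht => ht.1.2⟩
    set s := sSup S with hsdef
    have hs0 : 0 ≤ s := le_csSup hbdd ⟨⟨le_refl 0, ht₁0⟩, hx0B⟩
    have hst₁ : s ≤ t₁ := csSup_le hne fun t ht => ht.1.2
    have hsmem : s ∈ S := by
      obtain ⟨u, -, hu_tend, hu_mem⟩ := exists_seq_tendsto_sSup hne hbdd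
      refine ⟨⟨hs0, hst₁⟩, ?_⟩
      have : Tendsto (x ∘ u) atTop (nhds (x s)) := ((hxc s hs0).tendsto).comp hu_tend
      exact le_of_tendsto this (Eventually.of_forall fun n => (hu_mem n).2)
    have hst₁' : s < t₁ := by
      rcases lt_or_eq_of_le hst₁ with h | h
      · exact h
      · exfalso; rw [h] at hsmem; exact absurd hsmem.2 (not_le.2 ht₁)
    have hgt : ∀ t, s < t → t ≤ t₁ → B < x t := by
      intro t hst htt₁
      by_contra hle
      push_neg at hle
      have : t ∈ S := ⟨⟨le_trans hs0 hst.le, htt₁⟩, hle⟩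
      exact absurd (le_csSup hbdd this) (not_le.2 hst)
    have hanti : StrictAntiOn x (Icc s t₁) := by
      apply strictAntiOn_of_deriv_neg (convex_Icc s t₁)
        (fun t ht => (hxc t (le_trans hs0 ht.1)).continuousWithinAt)
      intro t ht
      rw [interior_Icc] at ht
      have ht0 : 0 ≤ t := le_trans hs0 ht.1.le
      have hxt : B < x t := hgt t ht.1 ht.2.le
      have hxtpos : 0 < x t := lt_trans hBpos hxt
      have hyt : 0 < y t := hypos t ht0
      have h2 : 0 < 1 + α * ξ + x t := by linarith
      rw [(hx t ht0).deriv]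
      have e1 : x t * (1 - x t / γ) < 0 := by
        apply mul_neg_of_pos_of_neg hxtpos
        rw [sub_neg]
        rw [lt_div_iff₀ hγ]
        nlinarith
      have e2 : 0 < x t * y t / (1 + α * ξ + x t) := by positivity
      linarith
    have := hanti (left_mem_Icc.2 hst₁) (right_mem_Icc.2 hst₁) hst₁'
    have hxs : x s ≤ B := hsmem.2
    linarith
  -- exponential growth of y
  obtain ⟨r, hrdef⟩ : ∃ r : ℝ, r = min (β * ξ / (1 + α * ξ)) β - δ := ⟨_, rfl⟩
  have hr : 0 < r := by
    have h1 : δ < ξ * (β - δ * α) := (div_lt_iff₀ hqual).1 hcrit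
    have h2 : δ < β * ξ / (1 + α * ξ) := by
      rw [lt_div_iff₀ hc]
      nlinarith
    have : δ < min (β * ξ / (1 + α * ξ)) β := lt_min h2 hβδ
    rw [hrdef]; linarith
  have hkey : ∀ t : ℝ, 0 ≤ t →
      min (β * ξ / (1 + α * ξ)) β ≤ β * x t / (1 + α * ξ + x t) + β * ξ / (1 + α * ξ + x t) := by
    intro t ht
    have h1 : 0 < x t := hxpos t ht
    have h2 : 0 < 1 + α * ξ + x t := by linarith
    rw [← add_div, le_div_iff₀ h2]
    rcases le_total (β * ξ / (1 + α * ξ)) β with h | h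
    · rw [min_eq_left h]
      have hqc : β * ξ / (1 + α * ξ) * (1 + α * ξ) = β * ξ := div_mul_cancel₀ _ hc.ne'
      nlinarith [mul_le_mul_of_nonneg_right h h1.le]
    · rw [min_eq_right h]
      have : β * (1 + α * ξ) ≤ β * ξ := by
        have := (le_div_iff₀ hc).1 h
        linarith
      nlinarith
  have hrate : ∀ t : ℝ, 0 ≤ t →
      r * y t ≤ β * x t * y t / (1 + α * ξ + x t) + β * ξ * y t / (1 + α * ξ + x t) - δ * y t := by
    intro t ht
    have h1 : 0 < x t := hxpos t ht
    have h2 : 0 < 1 + α * ξ + x t := by linarith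
    have hyt : 0 < y t := hypos t ht
    have hfac : β * x t * y t / (1 + α * ξ + x t) + β * ξ * y t / (1 + α * ξ + x t) - δ * y t
        = (β * x t / (1 + α * ξ + x t) + β * ξ / (1 + α * ξ + x t)) * y t - δ * y t := by ring
    rw [hfac, hrdef]
    have := mul_le_mul_of_nonneg_right (hkey t ht) hyt.le
    nlinarith [this]
  -- lower bound y t ≥ y 0 * exp (r * t)
  have hylb : ∀ t : ℝ, 0 ≤ t → y 0 * Real.exp (r * t) ≤ y t := by
    have humono : MonotoneOn (fun t => y t * Real.exp (-(r * t))) (Ici 0) := by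
      have hud : ∀ t : ℝ, 0 ≤ t → HasDerivAt (fun t => y t * Real.exp (-(r * t)))
          ((β * x t * y t / (1 + α * ξ + x t) + β * ξ * y t / (1 + α * ξ + x t) - δ * y t)
            * Real.exp (-(r * t)) + y t * (Real.exp (-(r * t)) * -r)) t := by
        intro t ht
        have hE : HasDerivAt (fun t : ℝ => Real.exp (-(r * t))) (Real.exp (-(r * t)) * -r) t := by
          have : HasDerivAt (fun t : ℝ => -(r * t)) (-r) t := by
            exact (((hasDerivAt_id t).const_mul r).neg).congr_deriv (by ring)
          simpa using this.exp
        exact (hy t ht).mul hE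
      have hEcont : Continuous fun t : ℝ => Real.exp (-(r * t)) :=
        Real.continuous_exp.comp ((continuous_const.mul continuous_id).neg)
      apply monotoneOn_of_deriv_nonneg (convex_Ici 0)
      · intro t ht
        exact ((hyc t ht).mul hEcont.continuousAt).continuousWithinAt
      · intro t ht
        rw [interior_Ici] at ht
        exact ((hud t ht.le).differentiableAt).differentiableWithinAt
      · intro t ht
        rw [interior_Ici] at ht
        rw [(hud t ht.le).deriv]
        have hE : (0:ℝ) < Real.exp (-(r * t)) := Real.exp_pos _
        set G := β * x t * y t / (1 + α * ξ + x t) + β * ξ * y t / (1 + α * ξ + x t) - δ * y t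
          with hG
        have h7 : r * y t ≤ G := hrate t ht.le
        have h8 : G * Real.exp (-(r * t)) + y t * (Real.exp (-(r * t)) * -r)
            = (G - r * y t) * Real.exp (-(r * t)) := by ring
        rw [h8]
        exact mul_nonneg (by linarith) hE.le
    intro t ht
    have h5 := humono (self_mem_Ici) (mem_Ici.2 ht) ht
    simp only [mul_zero, neg_zero, Real.exp_zero, mul_one] at h5
    have h6 := mul_le_mul_of_nonneg_right h5 (Real.exp_pos (r * t)).le
    rwa [mul_assoc, ← Real.exp_add, neg_add_cancel, Real.exp_zero, mul_one] at h6
  have hyto : Tendsto y atTop atTop := by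
    have hgrow : Tendsto (fun t => y 0 * Real.exp (r * t)) atTop atTop := by
      apply Tendsto.const_mul_atTop hy0
      exact Real.tendsto_exp_atTop.comp (tendsto_id.const_mul_atTop hr)
    exact tendsto_atTop_mono' atTop
      (by filter_upwards [eventually_ge_atTop (0:ℝ)] with t ht using hylb t ht) hgrow
  -- decay of x
  obtain ⟨T₀, hT₀⟩ := eventually_atTop.1
    ((hyto.eventually_ge_atTop (2 * (1 + α * ξ + B))).and (eventually_ge_atTop (0:ℝ)))
  have hT₀0 : 0 ≤ T₀ := (hT₀ T₀ le_rfl).2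
  have hdecay : ∀ t : ℝ, T₀ ≤ t →
      x t * (1 - x t / γ) - x t * y t / (1 + α * ξ + x t) ≤ -x t := by
    intro t ht
    have ht0 : 0 ≤ t := le_trans hT₀0 ht
    have h1 : 0 < x t := hxpos t ht0
    have h2 : 0 < 1 + α * ξ + x t := by linarith
    have hyt : 2 * (1 + α * ξ + B) ≤ y t := (hT₀ t ht).1
    have hxB : x t ≤ B := hB t ht0
    have e1 : x t * (1 - x t / γ) ≤ x t := by
      have h3 : 0 ≤ x t * (x t / γ) := by positivity
      nlinarith
    have e2 : 2 * x t ≤ x t * y t / (1 + α * ξ + x t) := by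
      rw [le_div_iff₀ h2]
      nlinarith [mul_le_mul_of_nonneg_left hyt h1.le, mul_le_mul_of_nonneg_left hxB h1.le]
    linarith
  have hvd : ∀ t : ℝ, 0 ≤ t → HasDerivAt (fun t => x t * Real.exp t)
      ((x t * (1 - x t / γ) - x t * y t / (1 + α * ξ + x t)) * Real.exp t + x t * Real.exp t) t :=
    fun t ht => (hx t ht).mul (Real.hasDerivAt_exp t)
  have hvanti : AntitoneOn (fun t => x t * Real.exp t) (Ici T₀) := by
    apply antitoneOn_of_deriv_nonpos (convex_Ici T₀)
    · exact fun t ht =>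
        ((hxc t (le_trans hT₀0 ht)).mul Real.continuous_exp.continuousAt).continuousWithinAt
    · intro t ht
      rw [interior_Ici] at ht
      exact ((hvd t (le_trans hT₀0 ht.le)).differentiableAt).differentiableWithinAt
    · intro t ht
      rw [interior_Ici] at ht
      rw [(hvd t (le_trans hT₀0 ht.le)).deriv]
      have hE : (0:ℝ) < Real.exp t := Real.exp_pos t
      have h7 := hdecay t ht.le
      nlinarith [mul_le_mul_of_nonneg_right h7 hE.le]
  have hxub : ∀ t : ℝ, T₀ ≤ t → x t ≤ x T₀ * Real.exp T₀ * Real.exp (-t) := by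
    intro t ht
    have h5 := hvanti (self_mem_Ici) (mem_Ici.2 ht) ht
    have h6 := mul_le_mul_of_nonneg_right h5 (Real.exp_pos (-t)).le
    rwa [mul_assoc, ← Real.exp_add, add_neg_cancel, Real.exp_zero, mul_one] at h6
  have hxto : Tendsto x atTop (nhds 0) := by
    have hub : Tendsto (fun t => x T₀ * Real.exp T₀ * Real.exp (-t)) atTop (nhds 0) := by
      rw [show (0:ℝ) = x T₀ * Real.exp T₀ * 0 by ring]
      exact Tendsto.const_mul _ (Real.tendsto_exp_atBot.comp tendsto_neg_atTop_atBot)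
    apply tendsto_of_tendsto_of_tendsto_of_le_of_le' tendsto_const_nhds hub
    · filter_upwards [eventually_ge_atTop (0:ℝ)] with t ht using (hxpos t ht).le
    · filter_upwards [eventually_ge_atTop T₀] with t ht using hxub t ht
  exact ⟨hxto, hyto⟩
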